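/- arXiv:1301.0797 — 4 statements merged into one kernel-verified Lean document; each statement's English description precedes it below -/
import Mathlib

section
/- Let X and Y be bounded normal operators on a complex Hilbert space with e^X = e^Y. Then Re(X) = Re(Y), where Re(T) = (T + T*)/2. -/
open MeasureTheory Complex ContinuousLinearMap NormedSpace

noncomputable section

variable {H : Type*} [NormedAddCommGroup H] [InnerProductSpace ℂ H] [CompleteSpace H]

/-- A projection-valued (spectral) measure on the Borel sets of `α`, acting on `H`. -/
structure IsPVM {α : Type*} [MeasurableSpace α] (E : Set α → H →L[ℂ] H) : Prop where
  selfAdjoint : ∀ Ω, IsSelfAdjoint (E Ω)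
  inter : ∀ Ω₁ Ω₂, MeasurableSet Ω₁ → MeasurableSet Ω₂ → E (Ω₁ ∩ Ω₂) = E Ω₁ * E Ω₂
  univ : E Set.univ = 1
  empty : E ∅ = 0
  countablyAdditive : ∀ f : ℕ → Set α, (∀ n, MeasurableSet (f n)) →
    Pairwise (Function.onFun Disjoint f) →
    ∀ ξ : H, HasSum (fun n => E (f n) ξ) (E (⋃ n, f n) ξ)

/-- `μ` is the diagonal scalar measure `Ω ↦ ⟪E(Ω)ξ, ξ⟫` of the PVM `E` at the vector `ξ`. -/
def IsDiagMeasure {α : Type*} [MeasurableSpace α] (E : Set α → H →L[ℂ] H) (ξ : H)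
    (μ : Measure α) : Prop :=
  ∀ Ω : Set α, MeasurableSet Ω → μ Ω = ENNReal.ofReal (inner ℂ (E Ω ξ) ξ : ℂ).re

/-- `T = ∫ f dE` in the weak (diagonal, hence by polarization full) sense; this is the
operator `f(X)` obtained from the Borel functional calculus when `E` is the spectral
measure of `X`. -/
def IsIntegralOf {α : Type*} [MeasurableSpace α] (E : Set α → H →L[ℂ] H) (f : α → ℂ)
    (T : H →L[ℂ] H) : Prop :=
  ∀ ξ : H, ∃ μ : Measure α, IsDiagMeasure E ξ μ ∧ (inner ℂ (T ξ) ξ : ℂ) = ∫ x, f x ∂μ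

/-- `E` is the spectral measure of the bounded normal operator `X`, extended to all
Borel subsets of `ℂ` by `E (Ω) = E (Ω ∩ σ(X))`. -/
def IsSpectralMeasureOf (X : H →L[ℂ] H) (E : Set ℂ → H →L[ℂ] H) : Prop :=
  IsPVM E ∧ IsIntegralOf E id X ∧
    ∀ Ω : Set ℂ, MeasurableSet Ω → E Ω = E (Ω ∩ spectrum ℂ X)

/-- The support of a PVM on `ℝ`: the spectrum of the associated (possibly unbounded)
self-adjoint operator. -/
def pvmSupport (E : Set ℝ → H →L[ℂ] H) : Set ℝ :=
  {t : ℝ | ∀ ε > 0, E (Metric.ball t ε) ≠ 0}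

/-- The commutant of a set of bounded operators. -/
def commutant (S : Set (H →L[ℂ] H)) : Set (H →L[ℂ] H) :=
  {Z : H →L[ℂ] H | ∀ T ∈ S, Z * T = T * Z}

/-- Normal `X, Y` with `e^X = e^Y` have equal real parts. -/
theorem stmt1 (X Y : H →L[ℂ] H) (hX : IsStarNormal X) (hY : IsStarNormal Y)
    (h : NormedSpace.exp X = NormedSpace.exp Y) :
    (2⁻¹ : ℂ) • (X + adjoint X) = (2⁻¹ : ℂ) • (Y + adjoint Y) := by
  have hXsa : IsSelfAdjoint (X + adjoint X) := by
    rw [← star_eq_adjoint]; exact IsSelfAdjoint.add_star_self X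
  have hYsa : IsSelfAdjoint (Y + adjoint Y) := by
    rw [← star_eq_adjoint]; exact IsSelfAdjoint.add_star_self Y
  have key : ∀ Z : H →L[ℂ] H, IsStarNormal Z →
      NormedSpace.exp (Z + adjoint Z) = NormedSpace.exp Z * star (NormedSpace.exp Z) := by
    intro Z hZ
    rw [star_exp, ← star_eq_adjoint,
      exp_add_of_commute_of_mem_ball (𝕂 := ℂ) hZ.star_comm_self.symm
        ((expSeries_radius_eq_top ℂ (H →L[ℂ] H)).symm ▸ edist_lt_top _ _)
        ((expSeries_radius_eq_top ℂ (H →L[ℂ] H)).symm ▸ edist_lt_top _ _)]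
  have h2 : NormedSpace.exp (X + adjoint X) = NormedSpace.exp (Y + adjoint Y) := by
    rw [key X hX, key Y hY, h]
  have h3 : NormedSpace.exp (X + adjoint X) = NormedSpace.exp (Y + adjoint Y) := by
    exact h2
  have h4 := CFC.log_exp (X + adjoint X) hXsa
  rw [h3, CFC.log_exp (Y + adjoint Y) hYsa] at h4
  rw [h4]
end
end

section
/- Let X and Y be bounded normal operators on a complex Hilbert space with spectra contained in the strip S = {z : |Im z| ≤ π}. If E_X(Ω) = E_Y(Ω) for all Borel subsets Ω of the open strip S°, and Re(X) = Re(Y), then e^X = e^Y. -/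
open MeasureTheory Complex ContinuousLinearMap NormedSpace

noncomputable section

variable {H : Type*} [NormedAddCommGroup H] [InnerProductSpace ℂ H] [CompleteSpace H]

namespace Aux

variable {α : Type*} [MeasurableSpace α] {E : Set α → H →L[ℂ] H}

lemma pvm_inner_move (hE : IsPVM E) (Ω : Set α) (x y : H) :
    (inner ℂ (E Ω x) y : ℂ) = inner ℂ x (E Ω y) := by
  conv_lhs => rw [← (hE.selfAdjoint Ω).adjoint_eq]
  rw [adjoint_inner_left]

lemma pvm_idem (hE : IsPVM E) {Ω : Set α} (hΩ : MeasurableSet Ω) : E Ω * E Ω = E Ω := by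
  rw [← hE.inter Ω Ω hΩ hΩ, Set.inter_self]

lemma pvm_inner_self (hE : IsPVM E) {Ω : Set α} (hΩ : MeasurableSet Ω) (ξ : H) :
    (inner ℂ (E Ω ξ) ξ : ℂ) = ((‖E Ω ξ‖^2 : ℝ) : ℂ) := by
  have h : E Ω ξ = E Ω (E Ω ξ) := by
    conv_lhs => rw [← pvm_idem hE hΩ]
    rfl
  calc (inner ℂ (E Ω ξ) ξ : ℂ) = inner ℂ (E Ω (E Ω ξ)) ξ := by rw [← h]
    _ = inner ℂ (E Ω ξ) (E Ω ξ) := pvm_inner_move hE Ω _ _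
    _ = ((‖E Ω ξ‖^2 : ℝ) : ℂ) := by
        rw [inner_self_eq_norm_sq_to_K]; norm_cast

lemma pvm_add (hE : IsPVM E) {A B : Set α} (hA : MeasurableSet A) (hB : MeasurableSet B)
    (hAB : Disjoint A B) : E (A ∪ B) = E A + E B := by
  ext ξ
  set f : ℕ → Set α := fun n => if n = 0 then A else if n = 1 then B else ∅ with hf
  have hmeas : ∀ n, MeasurableSet (f n) := by
    intro n
    rcases n with _ | _ | n <;> simp [hf, hA, hB]
  have hf0 : f 0 = A := rfl
  have hf1 : f 1 = B := rfl
  have hf2 : ∀ n, f (n + 2) = ∅ := fun n => rfl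
  have hdisj : Pairwise (Function.onFun Disjoint f) := by
    intro i j hij
    unfold Function.onFun
    rcases i with _ | _ | i <;> rcases j with _ | _ | j <;>
      simp only [hf0, hf1, hf2] <;>
      first
        | exact absurd rfl hij
        | exact hAB
        | exact hAB.symm
        | exact Set.disjoint_empty _
        | exact Set.empty_disjoint _
  have hU : (⋃ n, f n) = A ∪ B := by
    apply Set.Subset.antisymm
    · exact Set.iUnion_subset fun n => by
        rcases n with _ | _ | n <;> simp [hf]
    · intro x hx
      rcases hx with hx | hx
      · exact Set.mem_iUnion.mpr ⟨0, by simpa [hf] using hx⟩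
      · exact Set.mem_iUnion.mpr ⟨1, by simpa [hf] using hx⟩
  have h1 := hE.countablyAdditive f hmeas hdisj ξ
  rw [hU] at h1
  have h2 : HasSum (fun n => E (f n) ξ) (∑ b ∈ Finset.range 2, E (f b) ξ) := by
    apply hasSum_sum_of_ne_finset_zero
    intro b hb
    rcases b with _ | _ | b
    · simp at hb
    · simp at hb
    · simp [hf, hE.empty]
  have := h1.unique h2
  rw [this]
  simp [hf, Finset.sum_range_succ]

lemma pvm_compl (hE : IsPVM E) {Ω : Set α} (hΩ : MeasurableSet Ω) : E Ωᶜ = 1 - E Ω := by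
  have h := pvm_add hE hΩ hΩ.compl disjoint_compl_right
  rw [Set.union_compl_self, hE.univ] at h
  rw [eq_sub_iff_add_eq, add_comm, h]

lemma exp_proj {A : Type*} [NormedRing A] [NormedAlgebra ℂ A] [CompleteSpace A]
    (P : A) (hP : P * P = P) (c : ℂ) :
    NormedSpace.exp (c • P) = 1 + (Complex.exp c - 1) • P := by
  have hpow : ∀ n : ℕ, (c • P) ^ (n + 1) = (c ^ (n + 1)) • P := by
    intro n
    induction n with
    | zero => simp
    | succ n ih =>
      rw [pow_succ, ih, smul_mul_smul_comm, hP, ← pow_succ]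
  have hsummable : Summable fun n : ℕ => ((n.factorial : ℂ))⁻¹ • c ^ n := by
    simpa using expSeries_summable' (𝕂 := ℂ) c
  have hshift : Summable fun n : ℕ => (((n + 1).factorial : ℂ))⁻¹ * c ^ (n + 1) := by
    have := hsummable.comp_injective (add_left_injective 1)
    simpa [Function.comp_def, smul_eq_mul] using this
  have hexp : Complex.exp c = 1 + ∑' n : ℕ, (((n + 1).factorial : ℂ))⁻¹ * c ^ (n + 1) := by
    rw [Complex.exp_eq_exp_ℂ]
    simp only [NormedSpace.exp_eq_tsum ℂ]
    rw [Summable.tsum_eq_zero_add hsummable]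
    simp [smul_eq_mul]
  simp only [NormedSpace.exp_eq_tsum ℂ]
  rw [Summable.tsum_eq_zero_add (expSeries_summable' (𝕂 := ℂ) (c • P))]
  have heq : ∀ n : ℕ, (((n + 1).factorial : ℂ))⁻¹ • (c • P) ^ (n + 1)
      = ((((n + 1).factorial : ℂ))⁻¹ * c ^ (n + 1)) • P := by
    intro n; rw [hpow, smul_smul]
  rw [tsum_congr heq, hshift.tsum_smul_const P]
  have : Complex.exp c - 1 = ∑' n : ℕ, (((n + 1).factorial : ℂ))⁻¹ * c ^ (n + 1) := by
    rw [hexp]; ring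
  rw [← this]
  simp

section

variable {E : Set α → H →L[ℂ] H}

lemma diag_unique {ξ : H} {μ ν : Measure α}
    (h1 : IsDiagMeasure E ξ μ) (h2 : IsDiagMeasure E ξ ν) : μ = ν :=
  Measure.ext fun s hs => by rw [h1 s hs, h2 s hs]

lemma diag_finite {ξ : H} {μ : Measure α}
    (hμ : IsDiagMeasure E ξ μ) : IsFiniteMeasure μ := by
  constructor
  rw [hμ Set.univ MeasurableSet.univ]
  exact ENNReal.ofReal_lt_top

/-- triple product collapse. -/
lemma pvm_triple (hE : IsPVM E) {Ω₁ Ω₂ Ω₃ : Set α} (h1 : MeasurableSet Ω₁)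
    (h2 : MeasurableSet Ω₂) (h3 : MeasurableSet Ω₃) (ξ : H) :
    E Ω₁ (E Ω₂ (E Ω₃ ξ)) = E (Ω₁ ∩ Ω₂ ∩ Ω₃) ξ := by
  have h : E (Ω₁ ∩ Ω₂ ∩ Ω₃) = E Ω₁ * E Ω₂ * E Ω₃ := by
    rw [hE.inter _ _ (h1.inter h2) h3, hE.inter _ _ h1 h2]
  rw [h]; rfl

lemma diag_restrict (hE : IsPVM E) {ξ : H} {μ : Measure α} (hμ : IsDiagMeasure E ξ μ)
    {Ω : Set α} (hΩ : MeasurableSet Ω) :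
    IsDiagMeasure E (E Ω ξ) (μ.restrict Ω) := by
  intro s hs
  rw [Measure.restrict_apply hs, hμ _ (hs.inter hΩ)]
  congr 2
  rw [← pvm_inner_move hE Ω (E s (E Ω ξ)) ξ, pvm_triple hE hΩ hs hΩ,
    Set.inter_comm Ω s, Set.inter_assoc, Set.inter_self]

lemma diag_mix (hE : IsPVM E) {ξ : H} {μ : Measure α} (hμ : IsDiagMeasure E ξ μ)
    {Ω : Set α} (hΩ : MeasurableSet Ω) :
    IsDiagMeasure E (E Ω ξ + Complex.I • E Ωᶜ ξ) μ := by
  intro s hs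
  have e1 : (inner ℂ (E s (E Ω ξ)) (E Ω ξ) : ℂ) = inner ℂ (E (s ∩ Ω) ξ) ξ := by
    rw [← pvm_inner_move hE Ω (E s (E Ω ξ)) ξ, pvm_triple hE hΩ hs hΩ,
      Set.inter_comm Ω s, Set.inter_assoc, Set.inter_self]
  have e2 : (inner ℂ (E s (E Ωᶜ ξ)) (E Ωᶜ ξ) : ℂ) = inner ℂ (E (s ∩ Ωᶜ) ξ) ξ := by
    rw [← pvm_inner_move hE Ωᶜ (E s (E Ωᶜ ξ)) ξ, pvm_triple hE hΩ.compl hs hΩ.compl,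
      Set.inter_comm Ωᶜ s, Set.inter_assoc, Set.inter_self]
  have c1 : (inner ℂ (E s (E Ω ξ)) (E Ωᶜ ξ) : ℂ) = 0 := by
    rw [← pvm_inner_move hE Ωᶜ (E s (E Ω ξ)) ξ, pvm_triple hE hΩ.compl hs hΩ]
    have h0 : (Ωᶜ ∩ s ∩ Ω) = ∅ := by
      rw [Set.inter_comm Ωᶜ s, Set.inter_assoc]
      simp
    rw [h0, hE.empty]
    simp
  have c2 : (inner ℂ (E s (E Ωᶜ ξ)) (E Ω ξ) : ℂ) = 0 := by
    rw [← pvm_inner_move hE Ω (E s (E Ωᶜ ξ)) ξ, pvm_triple hE hΩ hs hΩ.compl]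
    have h0 : (Ω ∩ s ∩ Ωᶜ) = ∅ := by
      rw [Set.inter_comm Ω s, Set.inter_assoc]
      simp
    rw [h0, hE.empty]
    simp
  have hsplit : E s ξ = E (s ∩ Ω) ξ + E (s ∩ Ωᶜ) ξ := by
    have hu : E ((s ∩ Ω) ∪ (s ∩ Ωᶜ)) = E (s ∩ Ω) + E (s ∩ Ωᶜ) :=
      pvm_add hE (hs.inter hΩ) (hs.inter hΩ.compl)
        (Disjoint.mono Set.inter_subset_right Set.inter_subset_right disjoint_compl_right)
    have hss : (s ∩ Ω) ∪ (s ∩ Ωᶜ) = s := Set.inter_union_compl s Ω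
    have : E s ξ = E ((s ∩ Ω) ∪ (s ∩ Ωᶜ)) ξ := by rw [hss]
    rw [this, hu]
    rfl
  have key : (inner ℂ (E s (E Ω ξ + Complex.I • E Ωᶜ ξ)) (E Ω ξ + Complex.I • E Ωᶜ ξ) : ℂ)
      = inner ℂ (E s ξ) ξ := by
    rw [map_add, ContinuousLinearMap.map_smul]
    rw [inner_add_left, inner_add_right, inner_add_right, inner_smul_left, inner_smul_right,
      inner_smul_right, inner_smul_left, e1, e2, c1, c2]
    rw [hsplit, inner_add_left]
    simp only [Complex.conj_I, mul_zero, neg_zero, zero_add, add_zero, neg_mul, mul_neg]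
    rw [← mul_assoc, Complex.I_mul_I]
    ring
  rw [hμ s hs, ← key]

end

section SpectralAux

variable {X : H →L[ℂ] H} {E : Set ℂ → H →L[ℂ] H}

lemma diag_null (hE : IsSpectralMeasureOf X E) {ξ : H} {μ : Measure ℂ}
    (hμ : IsDiagMeasure E ξ μ) {Ω : Set ℂ} (hΩ : MeasurableSet Ω)
    (h : Ω ∩ spectrum ℂ X = ∅) : μ Ω = 0 := by
  rw [hμ Ω hΩ, hE.2.2 Ω hΩ, h, hE.1.empty]
  simp

lemma diag_integrable (hE : IsSpectralMeasureOf X E) {ξ : H} {μ : Measure ℂ}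
    (hμ : IsDiagMeasure E ξ μ) : Integrable (fun z : ℂ => z) μ := by
  haveI := diag_finite hμ
  have hb : ∀ᵐ z ∂μ, ‖(fun z : ℂ => z) z‖ ≤ ‖X‖ * ‖(1 : H →L[ℂ] H)‖ := by
    rw [MeasureTheory.ae_iff]
    have h0 : μ (spectrum ℂ X)ᶜ = 0 := by
      apply diag_null hE hμ (spectrum.isClosed X).measurableSet.compl
      simp
    refine measure_mono_null ?_ h0
    intro z hz
    simp only [Set.mem_setOf_eq, not_le] at hz
    intro hmem
    exact absurd (spectrum.norm_le_norm_mul_of_mem hmem) (not_le.mpr hz)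
  exact Integrable.mono' (integrable_const (‖X‖ * ‖(1 : H →L[ℂ] H)‖)) aestronglyMeasurable_id hb

lemma key_diag (hE : IsSpectralMeasureOf X E) {ξ : H} {μ : Measure ℂ}
    (hμ : IsDiagMeasure E ξ μ) :
    (inner ℂ (X ξ) ξ : ℂ) = ∫ z, z ∂μ := by
  obtain ⟨μ', hμ', hint⟩ := hE.2.1 ξ
  rw [diag_unique hμ hμ']
  simpa using hint

lemma key_diag_set (hE : IsSpectralMeasureOf X E) {ξ : H} {μ : Measure ℂ}
    (hμ : IsDiagMeasure E ξ μ) {Ω : Set ℂ} (hΩ : MeasurableSet Ω) :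
    (inner ℂ (X (E Ω ξ)) (E Ω ξ) : ℂ) = ∫ z in Ω, z ∂μ :=
  key_diag hE (diag_restrict hE.1 hμ hΩ)

lemma key_cross (hE : IsSpectralMeasureOf X E) {ξ : H} {μ : Measure ℂ}
    (hμ : IsDiagMeasure E ξ μ) {Ω : Set ℂ} (hΩ : MeasurableSet Ω) :
    (inner ℂ (X (E Ω ξ)) (E Ωᶜ ξ) : ℂ) = 0 ∧ (inner ℂ (X (E Ωᶜ ξ)) (E Ω ξ) : ℂ) = 0 := by
  have hint : Integrable (fun z : ℂ => z) μ := diag_integrable hE hμ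
  have hab : E Ω ξ + E Ωᶜ ξ = ξ := by
    rw [pvm_compl hE.1 hΩ]; simp
  have qa := key_diag_set hE hμ hΩ
  have qb : (inner ℂ (X (E Ωᶜ ξ)) (E Ωᶜ ξ) : ℂ) = ∫ z in Ωᶜ, z ∂μ := key_diag_set hE hμ hΩ.compl
  have hsum : (∫ z in Ω, z ∂μ) + (∫ z in Ωᶜ, z ∂μ) = ∫ z, z ∂μ := integral_add_compl hΩ hint
  have h1 : (inner ℂ (X ξ) ξ : ℂ) = ∫ z, z ∂μ := key_diag hE hμ
  have e1 : (inner ℂ (X (E Ω ξ)) (E Ωᶜ ξ) : ℂ) + inner ℂ (X (E Ωᶜ ξ)) (E Ω ξ) = 0 := by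
    have h2 : (inner ℂ (X (E Ω ξ + E Ωᶜ ξ)) (E Ω ξ + E Ωᶜ ξ) : ℂ) = ∫ z, z ∂μ := by
      rw [hab]; exact h1
    rw [map_add, inner_add_left, inner_add_right, inner_add_right, qa, qb, ← hsum] at h2
    linear_combination h2
  have h3 : (inner ℂ (X (E Ω ξ + Complex.I • E Ωᶜ ξ)) (E Ω ξ + Complex.I • E Ωᶜ ξ) : ℂ)
      = ∫ z, z ∂μ := key_diag hE (diag_mix hE.1 hμ hΩ)
  rw [map_add, ContinuousLinearMap.map_smul, inner_add_left, inner_add_right, inner_add_right,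
    inner_smul_left, inner_smul_right, inner_smul_right, inner_smul_left,
    qa, qb, Complex.conj_I, ← hsum] at h3
  rw [show (Complex.I * (-Complex.I * ∫ z in Ωᶜ, z ∂μ)) = ∫ z in Ωᶜ, z ∂μ by
    rw [← mul_assoc, mul_neg, Complex.I_mul_I]; ring] at h3
  have h4 : (inner ℂ (X (E Ω ξ)) (E Ωᶜ ξ) : ℂ) - inner ℂ (X (E Ωᶜ ξ)) (E Ω ξ) = 0 := by
    apply mul_left_cancel₀ Complex.I_ne_zero
    linear_combination h3
  constructor
  · linear_combination e1 / 2 + h4 / 2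
  · linear_combination e1 / 2 - h4 / 2

lemma key_diag_XE (hE : IsSpectralMeasureOf X E) {ξ : H} {μ : Measure ℂ}
    (hμ : IsDiagMeasure E ξ μ) {Ω : Set ℂ} (hΩ : MeasurableSet Ω) :
    (inner ℂ (X (E Ω ξ)) ξ : ℂ) = ∫ z in Ω, z ∂μ := by
  have hab : E Ω ξ + E Ωᶜ ξ = ξ := by
    rw [pvm_compl hE.1 hΩ]; simp
  have step : (inner ℂ (X (E Ω ξ)) ξ : ℂ) = inner ℂ (X (E Ω ξ)) (E Ω ξ + E Ωᶜ ξ) := by rw [hab]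
  rw [step, inner_add_right, key_diag_set hE hμ hΩ, (key_cross hE hμ hΩ).1, add_zero]

lemma key_diag_EX (hE : IsSpectralMeasureOf X E) {ξ : H} {μ : Measure ℂ}
    (hμ : IsDiagMeasure E ξ μ) {Ω : Set ℂ} (hΩ : MeasurableSet Ω) :
    (inner ℂ (E Ω (X ξ)) ξ : ℂ) = ∫ z in Ω, z ∂μ := by
  have hab : E Ω ξ + E Ωᶜ ξ = ξ := by
    rw [pvm_compl hE.1 hΩ]; simp
  rw [pvm_inner_move hE.1 Ω (X ξ) ξ]
  have step : (inner ℂ (X ξ) (E Ω ξ) : ℂ) = inner ℂ (X (E Ω ξ) + X (E Ωᶜ ξ)) (E Ω ξ) := by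
    rw [← map_add, hab]
  rw [step, inner_add_left, key_diag_set hE hμ hΩ, (key_cross hE hμ hΩ).2, add_zero]

lemma key_comm (hE : IsSpectralMeasureOf X E) {Ω : Set ℂ} (hΩ : MeasurableSet Ω) :
    X * E Ω = E Ω * X := by
  apply ContinuousLinearMap.coe_injective
  rw [← ext_inner_map]
  intro ξ
  obtain ⟨μ, hμ, -⟩ := hE.2.1 ξ
  show (inner ℂ (X (E Ω ξ)) ξ : ℂ) = inner ℂ (E Ω (X ξ)) ξ
  rw [key_diag_XE hE hμ hΩ, key_diag_EX hE hμ hΩ]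

lemma norm_re_cast (z : ℂ) : ‖((z.re : ℝ) : ℂ)‖ ≤ ‖z‖ := by
  rw [Complex.norm_real, Real.norm_eq_abs]
  exact Complex.abs_re_le_norm z

lemma boundary_decomp (hE : IsSpectralMeasureOf X E)
    (hs : spectrum ℂ X ⊆ {z : ℂ | |z.im| ≤ Real.pi}) :
    X * E {z : ℂ | |z.im| < Real.pi}ᶜ
      = (2⁻¹ : ℂ) • (X + adjoint X) * E {z : ℂ | |z.im| < Real.pi}ᶜ
        + (-((Real.pi : ℂ) * Complex.I)) •
            (E {z : ℂ | z.im = Real.pi} - E {z : ℂ | z.im = -Real.pi}) := by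
  have hSintM : MeasurableSet {z : ℂ | |z.im| < Real.pi} :=
    (isOpen_lt Complex.continuous_im.abs continuous_const).measurableSet
  have hLpM : MeasurableSet {z : ℂ | z.im = Real.pi} :=
    (isClosed_eq Complex.continuous_im continuous_const).measurableSet
  have hLmM : MeasurableSet {z : ℂ | z.im = -Real.pi} :=
    (isClosed_eq Complex.continuous_im continuous_const).measurableSet
  have hstripM : MeasurableSet {z : ℂ | |z.im| ≤ Real.pi} :=
    (isClosed_le Complex.continuous_im.abs continuous_const).measurableSet
  have hdecomp : {z : ℂ | |z.im| < Real.pi}ᶜ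
      = ({z : ℂ | z.im = Real.pi} ∪ {z : ℂ | z.im = -Real.pi}) ∪ {z : ℂ | |z.im| ≤ Real.pi}ᶜ := by
    ext z
    simp only [Set.mem_compl_iff, Set.mem_setOf_eq, Set.mem_union, not_lt, not_le]
    constructor
    · intro h
      rcases lt_or_eq_of_le h with h' | h'
      · exact Or.inr h'
      · rcases (abs_eq (le_of_lt Real.pi_pos)).mp h'.symm with h'' | h''
        · exact Or.inl (Or.inl h'')
        · exact Or.inl (Or.inr h'')
    · rintro ((h | h) | h)
      · rw [h, abs_of_pos Real.pi_pos]
      · rw [h, abs_neg, abs_of_pos Real.pi_pos]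
      · exact le_of_lt h
  have hdisjLpLm : Disjoint {z : ℂ | z.im = Real.pi} {z : ℂ | z.im = -Real.pi} := by
    rw [Set.disjoint_left]
    intro z h1 h2
    simp only [Set.mem_setOf_eq] at h1 h2
    rw [h1] at h2
    linarith [Real.pi_pos]
  apply ContinuousLinearMap.coe_injective
  rw [← ext_inner_map]
  intro ξ
  obtain ⟨μ, hμ, -⟩ := hE.2.1 ξ
  haveI : IsFiniteMeasure μ := diag_finite hμ
  have hint : Integrable (fun z : ℂ => z) μ := diag_integrable hE hμ
  have hIntRe : Integrable (fun z : ℂ => ((z.re : ℝ) : ℂ)) μ := by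
    apply Integrable.mono' hint.norm
    · exact (Complex.continuous_ofReal.comp Complex.continuous_re).aestronglyMeasurable
    · filter_upwards with z
      exact norm_re_cast z
  have hnull : μ {z : ℂ | |z.im| ≤ Real.pi}ᶜ = 0 := by
    apply diag_null hE hμ hstripM.compl
    apply Set.eq_empty_iff_forall_notMem.mpr
    rintro z ⟨h1, h2⟩
    exact h1 (hs h2)
  have hresB : μ.restrict {z : ℂ | |z.im| < Real.pi}ᶜ
      = μ.restrict ({z : ℂ | z.im = Real.pi} ∪ {z : ℂ | z.im = -Real.pi}) := by
    apply Measure.ext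
    intro s hsm
    rw [Measure.restrict_apply hsm, Measure.restrict_apply hsm]
    have h1 : s ∩ {z : ℂ | |z.im| < Real.pi}ᶜ
        = (s ∩ ({z : ℂ | z.im = Real.pi} ∪ {z : ℂ | z.im = -Real.pi}))
          ∪ (s ∩ {z : ℂ | |z.im| ≤ Real.pi}ᶜ) := by
      rw [hdecomp, Set.inter_union_distrib_left]
    rw [h1]
    apply le_antisymm
    · calc μ _ ≤ μ (s ∩ ({z : ℂ | z.im = Real.pi} ∪ {z : ℂ | z.im = -Real.pi}))
            + μ (s ∩ {z : ℂ | |z.im| ≤ Real.pi}ᶜ) := measure_union_le _ _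
        _ = μ (s ∩ ({z : ℂ | z.im = Real.pi} ∪ {z : ℂ | z.im = -Real.pi})) := by
            rw [measure_mono_null Set.inter_subset_right hnull, add_zero]
    · exact measure_mono Set.subset_union_left
  have hsplitInt : ∀ f : ℂ → ℂ, Integrable f μ →
      ∫ z in {z : ℂ | |z.im| < Real.pi}ᶜ, f z ∂μ
        = (∫ z in {z : ℂ | z.im = Real.pi}, f z ∂μ)
          + ∫ z in {z : ℂ | z.im = -Real.pi}, f z ∂μ := by
    intro f hf
    rw [hresB]
    exact setIntegral_union hdisjLpLm hLmM hf.integrableOn hf.integrableOn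
  have hLpInt : ∫ z in {z : ℂ | z.im = Real.pi}, z ∂μ
      = (∫ z in {z : ℂ | z.im = Real.pi}, ((z.re : ℝ) : ℂ) ∂μ)
        + (μ {z : ℂ | z.im = Real.pi}).toReal • ((Real.pi : ℂ) * Complex.I) := by
    rw [setIntegral_congr_fun (g := fun z : ℂ => ((z.re : ℝ) : ℂ) + (Real.pi : ℂ) * Complex.I)
      hLpM ?_]
    · rw [integral_add hIntRe.integrableOn (integrable_const _), setIntegral_const]; rfl
    · intro z hz
      simp only [Set.mem_setOf_eq] at hz
      conv_lhs => rw [← Complex.re_add_im z]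
      rw [hz]
  have hLmInt : ∫ z in {z : ℂ | z.im = -Real.pi}, z ∂μ
      = (∫ z in {z : ℂ | z.im = -Real.pi}, ((z.re : ℝ) : ℂ) ∂μ)
        - (μ {z : ℂ | z.im = -Real.pi}).toReal • ((Real.pi : ℂ) * Complex.I) := by
    rw [setIntegral_congr_fun (g := fun z : ℂ => ((z.re : ℝ) : ℂ) - (Real.pi : ℂ) * Complex.I)
      hLmM ?_]
    · rw [integral_sub hIntRe.integrableOn (integrable_const _), setIntegral_const]; rfl
    · intro z hz
      simp only [Set.mem_setOf_eq] at hz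
      conv_lhs => rw [← Complex.re_add_im z]
      rw [hz]
      push_cast
      ring
  have hmuLp : (((μ {z : ℂ | z.im = Real.pi}).toReal : ℝ) : ℂ)
      = inner ℂ (E {z : ℂ | z.im = Real.pi} ξ) ξ := by
    rw [hμ _ hLpM, pvm_inner_self hE.1 hLpM ξ, Complex.ofReal_re,
      ENNReal.toReal_ofReal (by positivity)]
  have hmuLm : (((μ {z : ℂ | z.im = -Real.pi}).toReal : ℝ) : ℂ)
      = inner ℂ (E {z : ℂ | z.im = -Real.pi} ξ) ξ := by
    rw [hμ _ hLmM, pvm_inner_self hE.1 hLmM ξ, Complex.ofReal_re,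
      ENNReal.toReal_ofReal (by positivity)]
  have hXdiag : (inner ℂ (X (E {z : ℂ | |z.im| < Real.pi}ᶜ ξ)) ξ : ℂ)
      = ∫ z in {z : ℂ | |z.im| < Real.pi}ᶜ, z ∂μ := key_diag_XE hE hμ hSintM.compl
  have hadjdiag : (inner ℂ ((adjoint X) (E {z : ℂ | |z.im| < Real.pi}ᶜ ξ)) ξ : ℂ)
      = (starRingEnd ℂ) (∫ z in {z : ℂ | |z.im| < Real.pi}ᶜ, z ∂μ) := by
    rw [adjoint_inner_left, pvm_inner_move hE.1, ← inner_conj_symm,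
      key_diag_EX hE hμ hSintM.compl]
  have hA : (starRingEnd ℂ) (∫ z in {z : ℂ | |z.im| < Real.pi}ᶜ, ((z.re : ℝ) : ℂ) ∂μ)
      = ∫ z in {z : ℂ | |z.im| < Real.pi}ᶜ, ((z.re : ℝ) : ℂ) ∂μ := by
    rw [← integral_conj]
    apply integral_congr_ae
    filter_upwards with z
    exact Complex.conj_ofReal _
  have hw : ∫ z in {z : ℂ | |z.im| < Real.pi}ᶜ, z ∂μ
      = (∫ z in {z : ℂ | |z.im| < Real.pi}ᶜ, ((z.re : ℝ) : ℂ) ∂μ)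
        + (((μ {z : ℂ | z.im = Real.pi}).toReal : ℝ) : ℂ) * ((Real.pi : ℂ) * Complex.I)
        - (((μ {z : ℂ | z.im = -Real.pi}).toReal : ℝ) : ℂ) * ((Real.pi : ℂ) * Complex.I) := by
    rw [hsplitInt _ hint, hsplitInt _ hIntRe, hLpInt, hLmInt, Complex.real_smul,
      Complex.real_smul]
    ring
  show (inner ℂ ((X * E {z : ℂ | |z.im| < Real.pi}ᶜ) ξ) ξ : ℂ)
      = inner ℂ (((2⁻¹ : ℂ) • (X + adjoint X) * E {z : ℂ | |z.im| < Real.pi}ᶜ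
        + (-((Real.pi : ℂ) * Complex.I)) •
            (E {z : ℂ | z.im = Real.pi} - E {z : ℂ | z.im = -Real.pi})) ξ) ξ
  rw [ContinuousLinearMap.add_apply, inner_add_left, ContinuousLinearMap.smul_apply,
    inner_smul_left, ContinuousLinearMap.sub_apply, inner_sub_left,
    ContinuousLinearMap.mul_apply, ContinuousLinearMap.mul_apply,
    ContinuousLinearMap.smul_apply, inner_smul_left, ContinuousLinearMap.add_apply,
    inner_add_left]
  rw [hXdiag, hadjdiag, ← hmuLp, ← hmuLm]
  rw [hw]
  simp only [map_sub, map_add, map_mul, map_neg, Complex.conj_I, Complex.conj_ofReal, hA]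
  have h2 : (starRingEnd ℂ) (2⁻¹ : ℂ) = 2⁻¹ := by
    rw [show ((2:ℂ))⁻¹ = ((2⁻¹:ℝ):ℂ) by norm_num]
    exact Complex.conj_ofReal _
  rw [h2]
  ring

lemma boundary_proj_sum (hE : IsSpectralMeasureOf X E)
    (hs : spectrum ℂ X ⊆ {z : ℂ | |z.im| ≤ Real.pi}) :
    E {z : ℂ | z.im = Real.pi} + E {z : ℂ | z.im = -Real.pi}
      = E {z : ℂ | |z.im| < Real.pi}ᶜ := by
  have hSintM : MeasurableSet {z : ℂ | |z.im| < Real.pi} :=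
    (isOpen_lt Complex.continuous_im.abs continuous_const).measurableSet
  have hLpM : MeasurableSet {z : ℂ | z.im = Real.pi} :=
    (isClosed_eq Complex.continuous_im continuous_const).measurableSet
  have hLmM : MeasurableSet {z : ℂ | z.im = -Real.pi} :=
    (isClosed_eq Complex.continuous_im continuous_const).measurableSet
  have hdisjLpLm : Disjoint {z : ℂ | z.im = Real.pi} {z : ℂ | z.im = -Real.pi} := by
    rw [Set.disjoint_left]
    intro z h1 h2
    simp only [Set.mem_setOf_eq] at h1 h2
    rw [h1] at h2
    linarith [Real.pi_pos]
  rw [← pvm_add hE.1 hLpM hLmM hdisjLpLm,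
    hE.2.2 _ (hLpM.union hLmM), hE.2.2 _ hSintM.compl]
  congr 1
  ext z
  simp only [Set.mem_inter_iff, Set.mem_union, Set.mem_setOf_eq, Set.mem_compl_iff, not_lt]
  constructor
  · rintro ⟨h | h, hσ⟩
    · exact ⟨by rw [h, abs_of_pos Real.pi_pos], hσ⟩
    · exact ⟨by rw [h, abs_neg, abs_of_pos Real.pi_pos], hσ⟩
  · rintro ⟨h, hσ⟩
    refine ⟨?_, hσ⟩
    have hle : |z.im| ≤ Real.pi := hs hσ
    rcases (abs_eq (le_of_lt Real.pi_pos)).mp (le_antisymm hle h) with h' | h'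
    · exact Or.inl h'
    · exact Or.inr h'

lemma exp_boundary {P1 P2 R : H →L[ℂ] H} (h1 : P1 * P1 = P1) (h2 : P2 * P2 = P2)
    (h12 : P1 * P2 = 0) (h21 : P2 * P1 = 0) (hsum : P1 + P2 = R) :
    NormedSpace.exp ((-((Real.pi : ℂ) * Complex.I)) • (P1 - P2)) = 1 - (2 : ℂ) • R := by
  have hc : Commute ((-((Real.pi : ℂ) * Complex.I)) • P1) (((Real.pi : ℂ) * Complex.I) • P2) := by
    apply Commute.smul_left
    apply Commute.smul_right
    show P1 * P2 = P2 * P1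
    rw [h12, h21]
  have hsplit : (-((Real.pi : ℂ) * Complex.I)) • (P1 - P2)
      = (-((Real.pi : ℂ) * Complex.I)) • P1 + ((Real.pi : ℂ) * Complex.I) • P2 := by
    rw [smul_sub, neg_smul, neg_smul, sub_neg_eq_add]
  let +nondep : NormedAlgebra ℚ (H →L[ℂ] H) := .restrictScalars ℚ ℂ (H →L[ℂ] H)
  rw [hsplit, exp_add_of_commute hc, exp_proj P1 h1 _, exp_proj P2 h2 _]
  have e1 : Complex.exp (-((Real.pi : ℂ) * Complex.I)) = -1 := by
    rw [Complex.exp_neg, Complex.exp_pi_mul_I]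
    norm_num
  have e2 : Complex.exp ((Real.pi : ℂ) * Complex.I) = -1 := Complex.exp_pi_mul_I
  rw [e1, e2, show ((-1 : ℂ) - 1) = -2 from by norm_num]
  rw [mul_add, mul_one, add_mul, one_mul, smul_mul_smul_comm, h12, smul_zero, add_zero,
    ← hsum, smul_add, neg_smul, neg_smul]
  abel

end SpectralAux

end Aux

/-- Normal `X, Y` with spectra in the strip `|Im z| ≤ π`, whose
spectral measures agree on Borel subsets of the open strip and whose real parts are
equal, satisfy `e^X = e^Y`. -/
theorem stmt3 (X Y : H →L[ℂ] H) (hX : IsStarNormal X) (hY : IsStarNormal Y)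
    (EX EY : Set ℂ → H →L[ℂ] H)
    (hEX : IsSpectralMeasureOf X EX) (hEY : IsSpectralMeasureOf Y EY)
    (hsX : spectrum ℂ X ⊆ {z : ℂ | |z.im| ≤ Real.pi})
    (hsY : spectrum ℂ Y ⊆ {z : ℂ | |z.im| ≤ Real.pi})
    (hmeas : ∀ Ω : Set ℂ, MeasurableSet Ω → Ω ⊆ {z : ℂ | |z.im| < Real.pi} → EX Ω = EY Ω)
    (hre : (2⁻¹ : ℂ) • (X + adjoint X) = (2⁻¹ : ℂ) • (Y + adjoint Y)) :
    NormedSpace.exp X = NormedSpace.exp Y := by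
  have hSintM : MeasurableSet {z : ℂ | |z.im| < Real.pi} :=
    (isOpen_lt Complex.continuous_im.abs continuous_const).measurableSet
  have hLpM : MeasurableSet {z : ℂ | z.im = Real.pi} :=
    (isClosed_eq Complex.continuous_im continuous_const).measurableSet
  have hLmM : MeasurableSet {z : ℂ | z.im = -Real.pi} :=
    (isClosed_eq Complex.continuous_im continuous_const).measurableSet
  -- the interior projections agree
  have hE0 : EY {z : ℂ | |z.im| < Real.pi} = EX {z : ℂ | |z.im| < Real.pi} :=
    (hmeas _ hSintM fun z hz => hz).symm
  have hcomplX : EX {z : ℂ | |z.im| < Real.pi}ᶜ = 1 - EX {z : ℂ | |z.im| < Real.pi} :=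
    Aux.pvm_compl hEX.1 hSintM
  have hcomplY : EY {z : ℂ | |z.im| < Real.pi}ᶜ = EX {z : ℂ | |z.im| < Real.pi}ᶜ := by
    rw [Aux.pvm_compl hEY.1 hSintM, hE0, ← hcomplX]
  -- choose diagonal measures
  choose μf hμf hintf using hEX.2.1
  choose νf hνf hintf' using hEY.2.1
  -- their restrictions to the open strip agree
  have hres : ∀ ξ : H, (μf ξ).restrict {z : ℂ | |z.im| < Real.pi}
      = (νf ξ).restrict {z : ℂ | |z.im| < Real.pi} := by
    intro ξ
    apply Measure.ext
    intro s hsm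
    rw [Measure.restrict_apply hsm, Measure.restrict_apply hsm,
      hμf ξ _ (hsm.inter hSintM), hνf ξ _ (hsm.inter hSintM),
      hmeas _ (hsm.inter hSintM) Set.inter_subset_right]
  -- the interior parts of X and Y agree
  have hXE0 : X * EX {z : ℂ | |z.im| < Real.pi} = Y * EX {z : ℂ | |z.im| < Real.pi} := by
    apply ContinuousLinearMap.coe_injective
    rw [← ext_inner_map]
    intro ξ
    show (inner ℂ (X (EX {z : ℂ | |z.im| < Real.pi} ξ)) ξ : ℂ)
        = inner ℂ (Y (EX {z : ℂ | |z.im| < Real.pi} ξ)) ξ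
    rw [Aux.key_diag_XE hEX (hμf ξ) hSintM, ← hE0,
      Aux.key_diag_XE hEY (hνf ξ) hSintM, hres ξ]
  -- boundary decompositions
  have hXR := Aux.boundary_decomp hEX hsX
  have hYR := Aux.boundary_decomp hEY hsY
  rw [hcomplY, ← hre] at hYR
  -- boundary projection sums
  have hPsum := Aux.boundary_proj_sum hEX hsX
  have hQsum : EY {z : ℂ | z.im = Real.pi} + EY {z : ℂ | z.im = -Real.pi}
      = EX {z : ℂ | |z.im| < Real.pi}ᶜ := by
    rw [Aux.boundary_proj_sum hEY hsY, hcomplY]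
  -- commutation facts
  have hXSint : Commute X (EX {z : ℂ | |z.im| < Real.pi}) := Aux.key_comm hEX hSintM
  have hXC : Commute X (EX {z : ℂ | |z.im| < Real.pi}ᶜ) := Aux.key_comm hEX hSintM.compl
  have hYSint : Commute Y (EX {z : ℂ | |z.im| < Real.pi}) := by
    rw [← hE0]; exact Aux.key_comm hEY hSintM
  have hYC : Commute Y (EX {z : ℂ | |z.im| < Real.pi}ᶜ) := by
    rw [← hcomplY]; exact Aux.key_comm hEY hSintM.compl
  have hz1 : EX {z : ℂ | |z.im| < Real.pi} * EX {z : ℂ | |z.im| < Real.pi}ᶜ = 0 := by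
    rw [← hEX.1.inter _ _ hSintM hSintM.compl, Set.inter_compl_self, hEX.1.empty]
  have hz2 : EX {z : ℂ | |z.im| < Real.pi}ᶜ * EX {z : ℂ | |z.im| < Real.pi} = 0 := by
    rw [← hEX.1.inter _ _ hSintM.compl hSintM, Set.compl_inter_self, hEX.1.empty]
  have hEcomm : Commute (EX {z : ℂ | |z.im| < Real.pi}) (EX {z : ℂ | |z.im| < Real.pi}ᶜ) := by
    show _ = _
    rw [hz1, hz2]
  -- splittings
  have hone : EX {z : ℂ | |z.im| < Real.pi} + EX {z : ℂ | |z.im| < Real.pi}ᶜ = 1 := by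
    rw [hcomplX]
    abel
  have hXsplit : X = X * EX {z : ℂ | |z.im| < Real.pi} + X * EX {z : ℂ | |z.im| < Real.pi}ᶜ := by
    calc X = X * 1 := (mul_one X).symm
      _ = X * (EX {z : ℂ | |z.im| < Real.pi} + EX {z : ℂ | |z.im| < Real.pi}ᶜ) := by rw [hone]
      _ = _ := mul_add X _ _
  have hYsplit : Y = Y * EX {z : ℂ | |z.im| < Real.pi} + Y * EX {z : ℂ | |z.im| < Real.pi}ᶜ := by
    calc Y = Y * 1 := (mul_one Y).symm
      _ = Y * (EX {z : ℂ | |z.im| < Real.pi} + EX {z : ℂ | |z.im| < Real.pi}ᶜ) := by rw [hone]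
      _ = _ := mul_add Y _ _
  have hcomm1 : Commute (X * EX {z : ℂ | |z.im| < Real.pi})
      (X * EX {z : ℂ | |z.im| < Real.pi}ᶜ) :=
    Commute.mul_right (Commute.mul_left (Commute.refl X) hXSint.symm)
      (Commute.mul_left hXC hEcomm)
  have hcomm2 : Commute (Y * EX {z : ℂ | |z.im| < Real.pi})
      (Y * EX {z : ℂ | |z.im| < Real.pi}ᶜ) :=
    Commute.mul_right (Commute.mul_left (Commute.refl Y) hYSint.symm)
      (Commute.mul_left hYC hEcomm)
  -- commutation of the "real part" with the boundary projections
  have hXLp : Commute X (EX {z : ℂ | z.im = Real.pi}) := Aux.key_comm hEX hLpM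
  have hXLm : Commute X (EX {z : ℂ | z.im = -Real.pi}) := Aux.key_comm hEX hLmM
  have hYLp : Commute Y (EY {z : ℂ | z.im = Real.pi}) := Aux.key_comm hEY hLpM
  have hYLm : Commute Y (EY {z : ℂ | z.im = -Real.pi}) := Aux.key_comm hEY hLmM
  have hadj : ∀ (T : H →L[ℂ] H) (S : H →L[ℂ] H), IsSelfAdjoint S → Commute T S →
      Commute (adjoint T) S := by
    intro T S hS hTS
    have h := congrArg star hTS.eq
    rw [star_mul, star_mul, hS.star_eq, ContinuousLinearMap.star_eq_adjoint] at h
    exact h.symm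
  have hRcomm : ∀ s t : Set ℂ, MeasurableSet s → MeasurableSet t →
      Commute (EX s) (EX t) := by
    intro s t hsm htm
    show _ = _
    rw [← hEX.1.inter _ _ hsm htm, ← hEX.1.inter _ _ htm hsm, Set.inter_comm]
  have hRcommY : ∀ s t : Set ℂ, MeasurableSet s → MeasurableSet t →
      Commute (EY s) (EY t) := by
    intro s t hsm htm
    show _ = _
    rw [← hEY.1.inter _ _ hsm htm, ← hEY.1.inter _ _ htm hsm, Set.inter_comm]
  have hBP : Commute ((2⁻¹ : ℂ) • (X + adjoint X) * EX {z : ℂ | |z.im| < Real.pi}ᶜ)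
      ((-((Real.pi : ℂ) * Complex.I)) •
        (EX {z : ℂ | z.im = Real.pi} - EX {z : ℂ | z.im = -Real.pi})) := by
    apply Commute.smul_right
    apply Commute.sub_right
    · exact Commute.mul_left (((hXLp.add_left (hadj X _ (hEX.1.selfAdjoint _) hXLp)).smul_left _))
        (hRcomm _ _ hSintM.compl hLpM)
    · exact Commute.mul_left (((hXLm.add_left (hadj X _ (hEX.1.selfAdjoint _) hXLm)).smul_left _))
        (hRcomm _ _ hSintM.compl hLmM)
  have hBalt : (2⁻¹ : ℂ) • (X + adjoint X) * EX {z : ℂ | |z.im| < Real.pi}ᶜ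
      = (2⁻¹ : ℂ) • (Y + adjoint Y) * EY {z : ℂ | |z.im| < Real.pi}ᶜ := by
    rw [hre, hcomplY]
  have hBQ : Commute ((2⁻¹ : ℂ) • (X + adjoint X) * EX {z : ℂ | |z.im| < Real.pi}ᶜ)
      ((-((Real.pi : ℂ) * Complex.I)) •
        (EY {z : ℂ | z.im = Real.pi} - EY {z : ℂ | z.im = -Real.pi})) := by
    rw [hBalt]
    apply Commute.smul_right
    apply Commute.sub_right
    · exact Commute.mul_left (((hYLp.add_left (hadj Y _ (hEY.1.selfAdjoint _) hYLp)).smul_left _))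
        (hRcommY _ _ hSintM.compl hLpM)
    · exact Commute.mul_left (((hYLm.add_left (hadj Y _ (hEY.1.selfAdjoint _) hYLm)).smul_left _))
        (hRcommY _ _ hSintM.compl hLmM)
  -- zero products of the boundary projections
  have hLpLm : ({z : ℂ | z.im = Real.pi} : Set ℂ) ∩ {z : ℂ | z.im = -Real.pi} = ∅ := by
    apply Set.eq_empty_iff_forall_notMem.mpr
    rintro z ⟨h1, h2⟩
    simp only [Set.mem_setOf_eq] at h1 h2
    rw [h1] at h2
    linarith [Real.pi_pos]
  have hLmLp : ({z : ℂ | z.im = -Real.pi} : Set ℂ) ∩ {z : ℂ | z.im = Real.pi} = ∅ := by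
    rw [Set.inter_comm]
    exact hLpLm
  -- the boundary exponentials
  have hPexp : NormedSpace.exp ((-((Real.pi : ℂ) * Complex.I)) •
      (EX {z : ℂ | z.im = Real.pi} - EX {z : ℂ | z.im = -Real.pi}))
      = 1 - (2 : ℂ) • EX {z : ℂ | |z.im| < Real.pi}ᶜ := by
    apply Aux.exp_boundary (Aux.pvm_idem hEX.1 hLpM) (Aux.pvm_idem hEX.1 hLmM)
    · rw [← hEX.1.inter _ _ hLpM hLmM, hLpLm, hEX.1.empty]
    · rw [← hEX.1.inter _ _ hLmM hLpM, hLmLp, hEX.1.empty]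
    · exact hPsum
  have hQexp : NormedSpace.exp ((-((Real.pi : ℂ) * Complex.I)) •
      (EY {z : ℂ | z.im = Real.pi} - EY {z : ℂ | z.im = -Real.pi}))
      = 1 - (2 : ℂ) • EX {z : ℂ | |z.im| < Real.pi}ᶜ := by
    apply Aux.exp_boundary (Aux.pvm_idem hEY.1 hLpM) (Aux.pvm_idem hEY.1 hLmM)
    · rw [← hEY.1.inter _ _ hLpM hLmM, hLpLm, hEY.1.empty]
    · rw [← hEY.1.inter _ _ hLmM hLpM, hLmLp, hEY.1.empty]
    · exact hQsum
  -- final assembly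
  let +nondep : NormedAlgebra ℚ (H →L[ℂ] H) := .restrictScalars ℚ ℂ (H →L[ℂ] H)
  rw [hXsplit, hYsplit, exp_add_of_commute hcomm1, exp_add_of_commute hcomm2, hXE0]
  congr 1
  rw [hXR, hYR, exp_add_of_commute hBP, exp_add_of_commute hBQ, hPexp, hQexp]
end
end

section
/- Let X and Y be bounded normal operators on a complex Hilbert space with spectra contained in the strip S = {z : |Im z| ≤ π}. If e^X = e^Y, then |X| = |Y|, where |T| = (T*T)^{1/2}. -/
open MeasureTheory Complex ContinuousLinearMap NormedSpace

noncomputable section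

variable {H : Type*} [NormedAddCommGroup H] [InnerProductSpace ℂ H] [CompleteSpace H]

namespace Stmt5Aux

/-- The Borel function recovering `|z|` from `e^z` on the strip `|Im z| ≤ π`. -/
noncomputable def g (w : ℂ) : ℂ :=
  (Real.sqrt ((Real.log (‖w‖)) ^ 2 + (Real.arccos (w.re / ‖w‖)) ^ 2) : ℝ)

lemma g_exp {z : ℂ} (hz : |z.im| ≤ Real.pi) : g (Complex.exp z) = (‖z‖ : ℂ) := by
  have h1 : ‖Complex.exp z‖ = Real.exp z.re := Complex.norm_exp z
  have h2 : (Complex.exp z).re / ‖Complex.exp z‖ = Real.cos z.im := by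
    rw [Complex.exp_re, h1]
    field_simp
  have h3 : Real.arccos (Real.cos z.im) = |z.im| := by
    rw [← Real.cos_abs, Real.arccos_cos (abs_nonneg _) hz]
  unfold g
  rw [h2, h3, h1, Real.log_exp, _root_.sq_abs, Complex.norm_def, Complex.normSq_apply]
  norm_num [pow_two]

lemma g_contOn : ContinuousOn g {w : ℂ | w ≠ 0} := by
  intro w hw
  have habs : ‖w‖ ≠ 0 := by
    simpa using hw
  apply ContinuousAt.continuousWithinAt
  apply Complex.continuous_ofReal.continuousAt.comp
  apply (Real.continuous_sqrt.continuousAt).comp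
  apply ContinuousAt.add
  · exact ((Real.continuousAt_log habs).comp (continuous_norm (E := ℂ)).continuousAt).pow 2
  · exact (Real.continuous_arccos.continuousAt.comp
      ((Complex.continuous_re.continuousAt).div (continuous_norm (E := ℂ)).continuousAt habs)).pow 2

end Stmt5Aux

set_option synthInstance.maxHeartbeats 1000000 in
set_option maxHeartbeats 1000000 in
open scoped ComplexOrder in
lemma stmt5_key {H : Type*} [NormedAddCommGroup H] [InnerProductSpace ℂ H] [CompleteSpace H]
    (X : H →L[ℂ] H) (hX : IsStarNormal X)
    (hsX : spectrum ℂ X ⊆ {z : ℂ | |z.im| ≤ Real.pi}) :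
    CFC.sqrt (adjoint X * X) = cfc Stmt5Aux.g (NormedSpace.exp X) := by
  have hcont_abs : ContinuousOn (fun z : ℂ => (‖z‖ : ℂ)) (spectrum ℂ X) :=
    (Complex.continuous_ofReal.comp (continuous_norm (E := ℂ))).continuousOn
  set a := cfc (fun z : ℂ => (‖z‖ : ℂ)) X with ha_def
  have ha_nonneg : (0 : H →L[ℂ] H) ≤ a :=
    cfc_nonneg fun x _ => Complex.zero_le_real.mpr (norm_nonneg x)
  have ha_sq : a * a = adjoint X * X := by
    rw [← ContinuousLinearMap.star_eq_adjoint]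
    calc a * a = cfc (fun z : ℂ => (‖z‖ : ℂ) * (‖z‖ : ℂ)) X :=
          (cfc_mul _ _ X hcont_abs hcont_abs).symm
      _ = cfc (fun z : ℂ => star z * z) X := by
          refine cfc_congr fun z _ => ?_
          rw [RCLike.star_def, mul_comm ((starRingEnd ℂ) z) z, Complex.mul_conj]
          norm_cast
          rw [Complex.normSq_eq_norm_sq, sq]
      _ = cfc (fun z : ℂ => star z) X * cfc (id : ℂ → ℂ) X := cfc_mul _ _ X
      _ = star X * X := by rw [cfc_id ℂ X, cfc_star (fun z : ℂ => z) X, cfc_id' ℂ X]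
  have h1 : CFC.sqrt (adjoint X * X) = a := CFC.sqrt_unique ha_sq ha_nonneg
  have hexp_cont : ContinuousOn Complex.exp (spectrum ℂ X) := Complex.continuous_exp.continuousOn
  have hg_cont : ContinuousOn Stmt5Aux.g (Complex.exp '' spectrum ℂ X) := by
    refine Stmt5Aux.g_contOn.mono ?_
    rintro w ⟨z, -, rfl⟩
    exact Complex.exp_ne_zero z
  have h2 : cfc Stmt5Aux.g (NormedSpace.exp X) = a := by
    rw [← CFC.complex_exp_eq_normedSpace_exp (a := X) hX, ← cfc_comp Stmt5Aux.g Complex.exp X hX hg_cont hexp_cont]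
    exact cfc_congr fun z hz => Stmt5Aux.g_exp (hsX hz)
  rw [h1, h2]

set_option synthInstance.maxHeartbeats 1000000 in
set_option maxHeartbeats 1000000 in
/-- Normal `X, Y` with spectra in the strip `|Im z| ≤ π` and
`e^X = e^Y` satisfy `|X| = |Y|`, where `|T| = (T*T)^{1/2}`. -/
theorem stmt5 (X Y : H →L[ℂ] H) (hX : IsStarNormal X) (hY : IsStarNormal Y)
    (hsX : spectrum ℂ X ⊆ {z : ℂ | |z.im| ≤ Real.pi})
    (hsY : spectrum ℂ Y ⊆ {z : ℂ | |z.im| ≤ Real.pi})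
    (h : NormedSpace.exp X = NormedSpace.exp Y) :
    CFC.sqrt (adjoint X * X) = CFC.sqrt (adjoint Y * Y) := by
  rw [stmt5_key X hX hsX, stmt5_key Y hY hsY, h]
end
end

section
/- Let X and Y be bounded normal operators on a complex Hilbert space with spectra contained in the strip {z : |Im z| ≤ π}, satisfying e^X = e^Y. Then |Im(X)| = |Im(Y)|, where Im(T) = (T − T*)/2 and |A| denotes the modulus of the operator A. -/
open MeasureTheory Complex ContinuousLinearMap NormedSpace

noncomputable section

variable {H : Type*} [NormedAddCommGroup H] [InnerProductSpace ℂ H] [CompleteSpace H]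

open scoped ComplexOrder in
set_option synthInstance.maxHeartbeats 1000000 in
set_option maxHeartbeats 1000000 in
lemma absIm_key (A : H →L[ℂ] H) (hA : IsStarNormal A)
    (hs : spectrum ℂ A ⊆ {z : ℂ | |z.im| ≤ Real.pi}) :
    CFC.sqrt (adjoint ((2⁻¹ : ℂ) • (A - adjoint A)) * ((2⁻¹ : ℂ) • (A - adjoint A))) =
      cfc (fun w : ℂ => ((Real.arccos (w.re / ‖w‖) : ℝ) : ℂ)) (NormedSpace.exp A) := by
  have hcont1 : ContinuousOn (fun z : ℂ => (2⁻¹ : ℂ) * (z - star z)) (spectrum ℂ A) :=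
    (continuous_const.mul (continuous_id'.sub continuous_star)).continuousOn
  have hcont2 : ContinuousOn (fun z : ℂ => star ((2⁻¹ : ℂ) * (z - star z))) (spectrum ℂ A) :=
    (continuous_star.comp (continuous_const.mul (continuous_id'.sub continuous_star))).continuousOn
  have h1 : cfc (fun z : ℂ => (2⁻¹ : ℂ) * (z - star z)) A = (2⁻¹ : ℂ) • (A - adjoint A) := by
    rw [cfc_const_mul (2⁻¹ : ℂ) (fun z : ℂ => z - star z) A
        ((continuous_id'.sub continuous_star).continuousOn),
      cfc_sub (fun z : ℂ => z) (fun z : ℂ => star z) A continuous_id'.continuousOn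
        continuous_star.continuousOn,
      cfc_id' ℂ A, cfc_star_id A, ContinuousLinearMap.star_eq_adjoint]
  have h2 : adjoint ((2⁻¹ : ℂ) • (A - adjoint A)) * ((2⁻¹ : ℂ) • (A - adjoint A)) =
      cfc (fun z : ℂ => ((z.im ^ 2 : ℝ) : ℂ)) A := by
    rw [← h1, ← ContinuousLinearMap.star_eq_adjoint, ← cfc_star,
      ← cfc_mul (fun z : ℂ => star ((2⁻¹ : ℂ) * (z - star z)))
        (fun z : ℂ => (2⁻¹ : ℂ) * (z - star z)) A hcont2 hcont1]
    refine cfc_congr fun z hz => ?_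
    simp only [Complex.star_def, Complex.ext_iff]
    constructor <;> simp [Complex.mul_re, Complex.mul_im, pow_two] <;> ring
  rw [h2]
  have h3 : CFC.sqrt (cfc (fun z : ℂ => ((z.im ^ 2 : ℝ) : ℂ)) A) =
      cfc (fun z : ℂ => ((|z.im| : ℝ) : ℂ)) A := by
    refine CFC.sqrt_unique ?_ ?_
    · rw [← cfc_mul (fun z : ℂ => ((|z.im| : ℝ) : ℂ)) (fun z : ℂ => ((|z.im| : ℝ) : ℂ)) A
        (Complex.continuous_ofReal.comp (continuous_abs.comp Complex.continuous_im)).continuousOn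
        (Complex.continuous_ofReal.comp (continuous_abs.comp Complex.continuous_im)).continuousOn]
      refine cfc_congr fun z hz => ?_
      rw [← Complex.ofReal_mul]
      norm_cast
      rw [abs_mul_abs_self]
      ring
    · exact cfc_nonneg fun z hz => by
        simpa using Complex.zero_le_real.mpr (abs_nonneg z.im)
  rw [h3]
  have hne : ∀ w ∈ Complex.exp '' spectrum ℂ A, ‖w‖ ≠ 0 := by
    rintro w ⟨z, hz, rfl⟩
    simp [Complex.exp_ne_zero]
  have hg : ContinuousOn (fun w : ℂ => ((Real.arccos (w.re / ‖w‖) : ℝ) : ℂ))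
      (Complex.exp '' spectrum ℂ A) := by
    apply Complex.continuous_ofReal.comp_continuousOn
    apply Real.continuous_arccos.comp_continuousOn
    exact Complex.continuous_re.continuousOn.div continuous_norm.continuousOn hne
  rw [← CFC.complex_exp_eq_normedSpace_exp (a := A),
    ← cfc_comp' _ Complex.exp A hg Complex.continuous_exp.continuousOn]
  refine cfc_congr fun z hz => ?_
  have hz' : |z.im| ≤ Real.pi := hs hz
  have key : Real.arccos ((Complex.exp z).re / ‖Complex.exp z‖) = |z.im| := by
    rw [Complex.norm_exp, Complex.exp_re, mul_div_cancel_left₀ _ (Real.exp_ne_zero _),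
      ← Real.cos_abs, Real.arccos_cos (abs_nonneg _) hz']
  simp [key]

set_option synthInstance.maxHeartbeats 1000000 in
set_option maxHeartbeats 1000000 in
/-- Normal `X, Y` with spectra in the strip `|Im z| ≤ π` and
`e^X = e^Y` satisfy `|Im X| = |Im Y|`, where `Im T = (T − T*)/2`. -/
theorem stmt16 (X Y : H →L[ℂ] H) (hX : IsStarNormal X) (hY : IsStarNormal Y)
    (hsX : spectrum ℂ X ⊆ {z : ℂ | |z.im| ≤ Real.pi})
    (hsY : spectrum ℂ Y ⊆ {z : ℂ | |z.im| ≤ Real.pi})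
    (h : NormedSpace.exp X = NormedSpace.exp Y) :
    CFC.sqrt (adjoint ((2⁻¹ : ℂ) • (X - adjoint X)) * ((2⁻¹ : ℂ) • (X - adjoint X))) =
      CFC.sqrt (adjoint ((2⁻¹ : ℂ) • (Y - adjoint Y)) * ((2⁻¹ : ℂ) • (Y - adjoint Y))) := by
  rw [absIm_key X hX hsX, absIm_key Y hY hsY, h]
end
end
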